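/- For every finite instance I over a relational schema and every finite acyclic set Σ of tuple-generating dependencies, the chase of I with Σ terminates, i.e., there exists a finite instance J extending I such that J satisfies all tgds in Σ. -/

import Mathlib

/-- Domain of values. -/
abbrev Val := ℕ
/-- Variables. -/
abbrev Var := ℕ
/-- Relation names. -/
abbrev RelName := ℕ
/-- A relational instance assigns a set of tuples to each relation name. -/
abbrev Instance := RelName → Set (List Val)

/-- Instance extension (inclusion). -/
def Instance.le (I J : Instance) : Prop := ∀ R, I R ⊆ J R

/-- A relational atom `R(x₁,…,xₖ)`. -/
structure Atom where
  rel : RelName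
  args : List Var

/-- Satisfaction of an atom under an assignment. -/
def holdsAtom (I : Instance) (ν : Var → Val) (a : Atom) : Prop :=
  a.args.map ν ∈ I a.rel

/-- A tuple-generating dependency, given by its body and head conjunctions. -/
structure TGD where
  body : List Atom
  head : List Atom

/-- Variables occurring in the body of a tgd. -/
def TGD.bodyVar (t : TGD) (v : Var) : Prop := ∃ a ∈ t.body, v ∈ a.args

/-- Satisfaction of a tgd: every assignment satisfying the body extends to one
satisfying the head. -/
def satTGD (I : Instance) (t : TGD) : Prop :=
  ∀ ν : Var → Val, (∀ a ∈ t.body, holdsAtom I ν a) →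
    ∃ ν' : Var → Val, (∀ v, t.bodyVar v → ν' v = ν v) ∧ ∀ a ∈ t.head, holdsAtom I ν' a

/-- A full tgd has no existential variables in its head. -/
def FullTGD (t : TGD) : Prop := ∀ a ∈ t.head, ∀ v ∈ a.args, t.bodyVar v

/-- A set of tgds is acyclic: the relation-dependency graph (edge from a body
relation to a head relation) has no cycle, witnessed by a rank function. -/
def AcyclicTGDs (ts : List TGD) : Prop :=
  ∃ rank : RelName → ℕ, ∀ t ∈ ts, ∀ a ∈ t.body, ∀ b ∈ t.head, rank a.rel < rank b.rel

/-- Finiteness of an instance (finitely many facts overall). -/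
def FiniteInst (I : Instance) : Prop := {p : RelName × List Val | p.2 ∈ I p.1}.Finite

/-- Relations appearing in heads of a set of tgds (the scope of a safe-scope procedure). -/
def headRels (ts : List TGD) : Set RelName := { R | ∃ t ∈ ts, ∃ b ∈ t.head, b.rel = R }

/-- Outcomes of applying a procedure with safe scope (identified with its set of
postcondition tgds): extensions of `I` satisfying the tgds, where all relations
outside the scope (the head relations) are unchanged. -/
def safeOutcomes (ts : List TGD) (I : Instance) : Set Instance :=
  { J | Instance.le I J ∧ (∀ t ∈ ts, satTGD J t) ∧ ∀ R, R ∉ headRels ts → I R = J R }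

/-- Outcomes of a sequence of procedures with safe scope. -/
def safeSeqOutcomes : List (List TGD) → Instance → Set Instance
  | [], I => {I}
  | Γ :: rest, I => ⋃ J ∈ safeOutcomes Γ I, safeSeqOutcomes rest J

/-- A boolean conjunctive query: a conjunction of atoms, all variables existential. -/
abbrev BCQ := List Atom

/-- Satisfaction of a boolean conjunctive query. -/
def holdsBCQ (I : Instance) (q : BCQ) : Prop :=
  ∃ ν : Var → Val, ∀ a ∈ q, holdsAtom I ν a

/-- The set of instances represented by a scoped knowledge base `(I, Γ, Scope)`. -/
def repSKB (I : Instance) (Γ : List TGD) (Scope : Set RelName) : Set Instance :=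
  { J | Instance.le I J ∧ (∀ t ∈ Γ, satTGD J t) ∧ ∀ R, R ∉ Scope → I R = J R }

/-- Minimal members of a set of instances. -/
def MinimalIn (S : Set Instance) (J : Instance) : Prop :=
  J ∈ S ∧ ∀ K ∈ S, Instance.le K J → K = J

/-- The set of facts of an instance. -/
def tupleSet (I : Instance) : Set (RelName × List Val) := {p | p.2 ∈ I p.1}


open Classical in
/-- Canonical extension of an assignment: keep body variables, send the rest to `0`. -/
noncomputable def chaseCanon (t : TGD) (ν : Var → Val) : Var → Val :=
  fun v => if t.bodyVar v then ν v else 0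

/-- One parallel chase step. -/
def chaseStep (Sig : List TGD) (J : Instance) : Instance :=
  fun R => J R ∪ {l | ∃ t ∈ Sig, ∃ b ∈ t.head, b.rel = R ∧
    ∃ ν : Var → Val, (∀ a ∈ t.body, holdsAtom J ν a) ∧ l = b.args.map (chaseCanon t ν)}

noncomputable def chaseN (Sig : List TGD) (I : Instance) : ℕ → Instance
  | 0 => I
  | n+1 => chaseStep Sig (chaseN Sig I n)

lemma chaseStep_le (Sig : List TGD) (J : Instance) : Instance.le J (chaseStep Sig J) :=
  fun _ => Set.subset_union_left

lemma chaseN_le (Sig : List TGD) (I : Instance) : ∀ n, Instance.le I (chaseN Sig I n)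
  | 0 => fun _ => le_refl _
  | n+1 => fun R => (chaseN_le Sig I n R).trans (chaseStep_le Sig (chaseN Sig I n) R)

lemma finite_lists (s : Set Val) (hs : s.Finite) :
    ∀ n, {l : List Val | l.length = n ∧ ∀ x ∈ l, x ∈ s}.Finite
  | 0 => Set.Finite.subset (Set.finite_singleton ([] : List Val)) (by
      rintro l ⟨hl, -⟩
      simpa using List.length_eq_zero_iff.mp hl)
  | n+1 => by
    have h := finite_lists s hs n
    have hsub : {l : List Val | l.length = n+1 ∧ ∀ x ∈ l, x ∈ s} ⊆
        (fun p : Val × List Val => p.1 :: p.2) ''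
          (s ×ˢ {l | l.length = n ∧ ∀ x ∈ l, x ∈ s}) := by
      rintro l ⟨hlen, hmem⟩
      cases l with
      | nil => simp at hlen
      | cons x xs =>
        refine ⟨(x, xs), ⟨hmem x (by simp), ?_, fun y hy => hmem y (by simp [hy])⟩, rfl⟩
        simpa using hlen
    exact ((hs.prod h).image _).subset hsub

/-- Values occurring in an instance. -/
def instVals (J : Instance) : Set Val := {x | ∃ p ∈ tupleSet J, x ∈ p.2}

lemma instVals_finite {J : Instance} (hJ : FiniteInst J) : (instVals J).Finite := by
  have : instVals J = ⋃ p ∈ tupleSet J, {x | x ∈ p.2} := by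
    ext x; simp [instVals]
  rw [this]
  exact Set.Finite.biUnion hJ (fun p _ => p.2.finite_toSet)

lemma chaseStep_finite (Sig : List TGD) (J : Instance) (hJ : FiniteInst J) :
    FiniteInst (chaseStep Sig J) := by
  classical
  set V : Set Val := insert 0 (instVals J) with hVdef
  have hV : V.Finite := (instVals_finite hJ).insert 0
  have hbig : (⋃ t ∈ {t | t ∈ Sig}, ⋃ b ∈ {b | b ∈ t.head},
      (fun l => (b.rel, l)) '' {l : List Val | l.length = b.args.length ∧ ∀ x ∈ l, x ∈ V}).Finite := by
    refine Set.Finite.biUnion Sig.finite_toSet (fun t _ => ?_)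
    refine Set.Finite.biUnion t.head.finite_toSet (fun b _ => ?_)
    exact (finite_lists V hV _).image _
  refine Set.Finite.subset (hJ.union hbig) ?_
  rintro ⟨R, l⟩ hmem
  rcases hmem with hmem | ⟨t, ht, b, hb, hR, ν, hbody, hl⟩
  · exact Or.inl hmem
  · refine Or.inr ?_
    have hl' : l = b.args.map (chaseCanon t ν) := hl
    have hR' : b.rel = R := hR
    refine Set.mem_biUnion ht (Set.mem_biUnion hb ?_)
    refine ⟨l, ⟨?_, ?_⟩, by rw [hR']⟩
    · rw [hl']; exact List.length_map _
    · intro x hx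
      rw [hl'] at hx
      rcases List.mem_map.mp hx with ⟨v, hv, rfl⟩
      by_cases hbv : t.bodyVar v
      · have hcv : chaseCanon t ν v = ν v := if_pos hbv
        rw [hcv]
        obtain ⟨a, ha, hva⟩ := hbv
        exact Set.mem_insert_iff.mpr
          (Or.inr ⟨(a.rel, a.args.map ν), hbody a ha, List.mem_map_of_mem hva⟩)
      · have hcv : chaseCanon t ν v = 0 := if_neg hbv
        rw [hcv]
        exact Set.mem_insert _ _

lemma chaseN_finite (Sig : List TGD) (I : Instance) (hI : FiniteInst I) :
    ∀ n, FiniteInst (chaseN Sig I n)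
  | 0 => hI
  | n+1 => chaseStep_finite Sig _ (chaseN_finite Sig I hI n)

lemma chase_new_rank (Sig : List TGD) (I : Instance) (rank : RelName → ℕ)
    (hr : ∀ t ∈ Sig, ∀ a ∈ t.body, ∀ b ∈ t.head, rank a.rel < rank b.rel) :
    ∀ n R l, l ∈ chaseN Sig I (n+1) R → l ∉ chaseN Sig I n R → n ≤ rank R := by
  intro n
  induction n with
  | zero => intro R l _ _; exact Nat.zero_le _
  | succ n ih =>
    intro R l h1 h2
    rcases h1 with h1 | ⟨t, ht, b, hb, hR, ν, hbody, hl⟩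
    · exact absurd h1 h2
    · by_cases hall : ∀ a ∈ t.body, holdsAtom (chaseN Sig I n) ν a
      · exact absurd (Or.inr ⟨t, ht, b, hb, hR, ν, hall, hl⟩ :
          l ∈ chaseN Sig I (n+1) R) h2
      · push_neg at hall
        obtain ⟨a, ha, hna⟩ := hall
        have h1 := ih a.rel (a.args.map ν) (hbody a ha) hna
        have h2 := hr t ht a ha b hb
        rw [← hR]
        omega

lemma foldr_max_le {l : List ℕ} {a : ℕ} (h : a ∈ l) : a ≤ l.foldr max 0 := by
  induction l with
  | nil => simp at h
  | cons x xs ih =>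
    rcases List.mem_cons.mp h with h | h
    · simp [h, le_max_iff]
    · exact le_trans (ih h) (le_max_right _ _)

/-- The chase of a finite instance with a finite acyclic set of tgds terminates:
there is a finite extension of `I` satisfying all the tgds. -/
theorem acyclic_chase_terminates
    (I : Instance) (hI : FiniteInst I)
    (Sig : List TGD) (hacyc : AcyclicTGDs Sig) :
    ∃ J : Instance, Instance.le I J ∧ FiniteInst J ∧ ∀ t ∈ Sig, satTGD J t := by
  obtain ⟨rank, hr⟩ := hacyc
  set N : ℕ := ((Sig.map fun t => (t.head.map fun b => rank b.rel).foldr max 0).foldr max 0) + 1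
    with hN
  have hhead : ∀ t ∈ Sig, ∀ b ∈ t.head, rank b.rel < N := by
    intro t ht b hb
    have h1 : rank b.rel ≤ (t.head.map fun b => rank b.rel).foldr max 0 :=
      foldr_max_le (List.mem_map_of_mem hb)
    have h2 : (t.head.map fun b => rank b.rel).foldr max 0 ≤
        (Sig.map fun t => (t.head.map fun b => rank b.rel).foldr max 0).foldr max 0 :=
      foldr_max_le (List.mem_map_of_mem ht)
    omega
  refine ⟨chaseN Sig I N, chaseN_le Sig I N, chaseN_finite Sig I hI N, ?_⟩
  intro t ht ν hbody
  refine ⟨chaseCanon t ν, fun v hv => if_pos hv, ?_⟩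
  intro b hb
  have hstep : b.args.map (chaseCanon t ν) ∈ chaseN Sig I (N+1) b.rel :=
    Or.inr ⟨t, ht, b, hb, rfl, ν, hbody, rfl⟩
  by_cases hmem : b.args.map (chaseCanon t ν) ∈ chaseN Sig I N b.rel
  · exact hmem
  · have := chase_new_rank Sig I rank hr N b.rel _ hstep hmem
    have := hhead t ht b hb
    omega
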